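/- If G(s,x) is holomorphic in both variables on a neighborhood of (s0+S_j(x0), x0) in C^2, then the function (R_j G)(s,x) = ∫_{x0}^{x} (D₁G)(s + S_j(x) − S_j(y), y) p_j(y) dy, where the integral is along a path in a simply connected domain where p_j is holomorphic and S_j(x)=∫_{x0}^x p_j, is holomorphic in (s,x) on a neighborhood of (s0,x0). -/

import Mathlib

open Complex Set
open Metric MeasureTheory Real Filter

/-- A continuous linear map `ℂ × ℂ →L[ℂ] ℂ` is determined by the two partial values. -/
lemma clm_decomp (L : ℂ × ℂ →L[ℂ] ℂ) :
    L = L (1, 0) • ContinuousLinearMap.fst ℂ ℂ ℂ + L (0, 1) • ContinuousLinearMap.snd ℂ ℂ ℂ := by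
  apply ContinuousLinearMap.ext
  rintro ⟨u, v⟩
  have h : ((u, v) : ℂ × ℂ) = u • ((1:ℂ), (0:ℂ)) + v • ((0:ℂ), (1:ℂ)) := by
    simp [Prod.ext_iff]
  rw [h, map_add, _root_.map_smul, _root_.map_smul]
  simp [ContinuousLinearMap.add_apply, smul_eq_mul]
  ring

/-- A jointly differentiable function has the expected full derivative built from the two
partial derivatives. -/
lemma hasFDerivAt_of_partials {f : ℂ × ℂ → ℂ} {q : ℂ × ℂ} (hd : DifferentiableAt ℂ f q) :
    HasFDerivAt f
      ((deriv (fun z => f (z, q.2)) q.1) • ContinuousLinearMap.fst ℂ ℂ ℂ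
        + (deriv (fun z => f (q.1, z)) q.2) • ContinuousLinearMap.snd ℂ ℂ ℂ) q := by
  have h := hd.hasFDerivAt
  have h1 : HasDerivAt (fun z => f (z, q.2)) (fderiv ℂ f q (1, 0)) q.1 := by
    have hg : HasDerivAt (fun z : ℂ => (z, q.2)) ((1:ℂ), (0:ℂ)) q.1 :=
      (hasDerivAt_id q.1).prodMk (hasDerivAt_const _ _)
    exact h.comp_hasDerivAt q.1 hg
  have h2 : HasDerivAt (fun z => f (q.1, z)) (fderiv ℂ f q (0, 1)) q.2 := by
    have hg : HasDerivAt (fun z : ℂ => (q.1, z)) ((0:ℂ), (1:ℂ)) q.2 :=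
      (hasDerivAt_const _ _).prodMk (hasDerivAt_id q.2)
    exact h.comp_hasDerivAt q.2 hg
  rw [h1.deriv, h2.deriv, ← clm_decomp]
  exact h

section PartialDeriv

variable {U : Set (ℂ × ℂ)} {f : ℂ × ℂ → ℂ}

/-- distance from a point of the circle to a point near the center. -/
lemma circle_far {c s : ℂ} {δ : ℝ} (hs : dist s c ≤ δ / 2) (θ : ℝ) (hδ : 0 < δ) :
    δ / 2 ≤ dist (circleMap c δ θ) s := by
  have h1 : dist (circleMap c δ θ) c = δ := by
    simp [Complex.dist_eq, circleMap_sub_center, norm_circleMap_zero, abs_of_pos hδ]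
  have := dist_triangle (circleMap c δ θ) s c
  have h2 : dist s c ≤ δ / 2 := hs
  linarith [this, h1]

lemma circle_ne {c s : ℂ} {δ : ℝ} (hs : dist s c ≤ δ / 2) (θ : ℝ) (hδ : 0 < δ) :
    circleMap c δ θ - s ≠ 0 := by
  have := circle_far hs θ hδ
  intro h
  rw [sub_eq_zero] at h
  rw [h] at this
  simp at this
  linarith

/-- Membership of circle points paired with nearby second coordinates. -/
lemma circle_pair_mem {q0 : ℂ × ℂ} {δ : ℝ} (hδ : 0 < δ) (hδU : closedBall q0 δ ⊆ U)
    {x : ℂ} (hx : dist x q0.2 ≤ δ) (θ : ℝ) : (circleMap q0.1 δ θ, x) ∈ U := by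
  apply hδU
  rw [← closedBall_prod_same]
  constructor
  · rw [mem_closedBall, Complex.dist_eq]
    rw [circleMap_sub_center]
    simp [norm_circleMap_zero, abs_of_pos hδ]
  · exact hx

/-- Cauchy representation of the first partial derivative near a point. -/
lemma partial_fst_rep (hU : IsOpen U) (hf : DifferentiableOn ℂ f U)
    {q0 : ℂ × ℂ} {δ : ℝ} (hδ : 0 < δ) (hδU : closedBall q0 δ ⊆ U) {q : ℂ × ℂ}
    (hq : q ∈ ball q0 δ) :
    deriv (fun z => f (z, q.2)) q.1 =
      (2 * π * I)⁻¹ * ∫ θ in (0:ℝ)..(2*π), (circleMap 0 δ θ * I) *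
        (((circleMap q0.1 δ θ - q.1) ^ 2)⁻¹ * f (circleMap q0.1 δ θ, q.2)) := by
  rw [← ball_prod_same] at hq
  obtain ⟨hq1, hq2⟩ := hq
  have hopen : IsOpen {z : ℂ | (z, q.2) ∈ U} := hU.preimage (continuous_id.prodMk continuous_const)
  have hsub : closedBall q0.1 δ ⊆ {z : ℂ | (z, q.2) ∈ U} := by
    intro z hz
    apply hδU
    rw [← closedBall_prod_same]
    exact ⟨hz, ball_subset_closedBall hq2⟩
  have hdiff : DifferentiableOn ℂ (fun z => f (z, q.2)) {z : ℂ | (z, q.2) ∈ U} := by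
    intro z hz
    exact ((hf.differentiableAt (hU.mem_nhds hz)).comp z
      (differentiableAt_id.prodMk (differentiableAt_const _))).differentiableWithinAt
  have := Complex.two_pi_I_inv_smul_circleIntegral_sub_sq_inv_smul_of_differentiable
    hopen hsub hdiff hq1
  rw [← this]
  simp only [circleIntegral, deriv_circleMap, smul_eq_mul]

end PartialDeriv

noncomputable def cInt (f : ℂ × ℂ → ℂ) (q0 : ℂ × ℂ) (δ : ℝ) (q : ℂ × ℂ) (θ : ℝ) : ℂ :=
  (circleMap 0 δ θ * I) * (((circleMap q0.1 δ θ - q.1) ^ 2)⁻¹ * f (circleMap q0.1 δ θ, q.2))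

section PartialDeriv2

variable {U : Set (ℂ × ℂ)} {f : ℂ × ℂ → ℂ}

/-- Joint continuity of the Cauchy integrand. -/
lemma cauchy_integrand_contOn (hf : DifferentiableOn ℂ f U)
    {q0 : ℂ × ℂ} {δ : ℝ} (hδ : 0 < δ) (hδU : closedBall q0 δ ⊆ U) :
    ContinuousOn (fun ξ : (ℂ × ℂ) × ℝ => cInt f q0 δ ξ.1 ξ.2)
      (closedBall q0 (δ/2) ×ˢ (univ : Set ℝ)) := by
  have hc1 : Continuous fun ξ : (ℂ × ℂ) × ℝ => circleMap 0 δ ξ.2 * I :=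
    ((continuous_circleMap 0 δ).comp continuous_snd).mul continuous_const
  have hz : Continuous fun ξ : (ℂ × ℂ) × ℝ => circleMap q0.1 δ ξ.2 :=
    (continuous_circleMap q0.1 δ).comp continuous_snd
  have hmemq : ∀ ξ : (ℂ × ℂ) × ℝ, ξ ∈ closedBall q0 (δ/2) ×ˢ (univ : Set ℝ) →
      dist ξ.1.1 q0.1 ≤ δ/2 ∧ dist ξ.1.2 q0.2 ≤ δ/2 := by
    rintro ξ ⟨hξ, -⟩
    rw [mem_closedBall, Prod.dist_eq] at hξ
    exact ⟨le_trans (le_max_left _ _) hξ, le_trans (le_max_right _ _) hξ⟩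
  have hc2 : ContinuousOn (fun ξ : (ℂ × ℂ) × ℝ => ((circleMap q0.1 δ ξ.2 - ξ.1.1) ^ 2)⁻¹)
      (closedBall q0 (δ/2) ×ˢ (univ : Set ℝ)) := by
    apply ContinuousOn.inv₀
    · exact ((hz.sub (continuous_fst.fst)).pow 2).continuousOn
    · intro ξ hξ
      exact pow_ne_zero 2 (circle_ne (hmemq ξ hξ).1 ξ.2 hδ)
  have hc3 : ContinuousOn (fun ξ : (ℂ × ℂ) × ℝ => f (circleMap q0.1 δ ξ.2, ξ.1.2))
      (closedBall q0 (δ/2) ×ˢ (univ : Set ℝ)) := by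
    apply (hf.continuousOn.mono hδU).comp (hz.prodMk continuous_fst.snd).continuousOn
    intro ξ hξ
    rw [← closedBall_prod_same]
    constructor
    · rw [mem_closedBall, Complex.dist_eq, circleMap_sub_center]
      simp [norm_circleMap_zero, abs_of_pos hδ]
    · exact mem_closedBall.2 ((hmemq ξ hξ).2.trans (by linarith))
  simp only [cInt]
  exact hc1.continuousOn.mul (hc2.mul hc3)

lemma cauchy_integrand_cont_theta (hf : DifferentiableOn ℂ f U)
    {q0 : ℂ × ℂ} {δ : ℝ} (hδ : 0 < δ) (hδU : closedBall q0 δ ⊆ U) {q : ℂ × ℂ}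
    (hq : q ∈ closedBall q0 (δ/2)) : Continuous fun θ => cInt f q0 δ q θ := by
  have hc : Continuous fun θ : ℝ => ((q, θ) : (ℂ × ℂ) × ℝ) :=
    continuous_const.prodMk continuous_id
  rw [← continuousOn_univ]
  apply ContinuousOn.comp (t := closedBall q0 (δ/2) ×ˢ (univ : Set ℝ))
    (cauchy_integrand_contOn hf hδ hδU) hc.continuousOn
  exact fun θ _ => Set.mk_mem_prod hq (mem_univ θ)

lemma cauchy_integrand_cont_q (hf : DifferentiableOn ℂ f U)
    {q0 : ℂ × ℂ} {δ : ℝ} (hδ : 0 < δ) (hδU : closedBall q0 δ ⊆ U) (θ : ℝ) :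
    ContinuousAt (fun q => cInt f q0 δ q θ) q0 := by
  have hc : Continuous fun q : ℂ × ℂ => ((q, θ) : (ℂ × ℂ) × ℝ) :=
    continuous_id.prodMk continuous_const
  have h2 : ContinuousOn (fun q : ℂ × ℂ => cInt f q0 δ q θ) (closedBall q0 (δ/2)) := by
    apply ContinuousOn.comp (t := closedBall q0 (δ/2) ×ˢ (univ : Set ℝ))
      (cauchy_integrand_contOn hf hδ hδU) hc.continuousOn
    exact fun q hq => Set.mk_mem_prod hq (mem_univ θ)
  exact (h2 q0 (mem_closedBall_self (by positivity))).continuousAt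
    (closedBall_mem_nhds q0 (by positivity))

lemma cauchy_integrand_bound {q0 : ℂ × ℂ} {δ : ℝ} (hδ : 0 < δ) {M : ℝ}
    (hM : ∀ r ∈ closedBall q0 δ, ‖f r‖ ≤ M) {q : ℂ × ℂ}
    (hq : q ∈ closedBall q0 (δ/2)) (θ : ℝ) :
    ‖cInt f q0 δ q θ‖ ≤ δ * (((δ/2) ^ 2)⁻¹ * M) := by
  rw [mem_closedBall, Prod.dist_eq, max_le_iff] at hq
  have h1 : ‖circleMap 0 δ θ * I‖ = δ := by
    simp [norm_mul, norm_circleMap_zero, abs_of_pos hδ]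
  have h2 : ‖((circleMap q0.1 δ θ - q.1) ^ 2)⁻¹‖ ≤ ((δ/2) ^ 2)⁻¹ := by
    rw [norm_inv, norm_pow]
    apply inv_anti₀ (by positivity)
    apply pow_le_pow_left₀ (by positivity)
    rw [← Complex.dist_eq]
    exact circle_far hq.1 θ hδ
  have h3 : ‖f (circleMap q0.1 δ θ, q.2)‖ ≤ M := by
    apply hM
    rw [← closedBall_prod_same]
    refine ⟨?_, mem_closedBall.2 (hq.2.trans (by linarith))⟩
    rw [mem_closedBall, Complex.dist_eq, circleMap_sub_center]
    simp [norm_circleMap_zero, abs_of_pos hδ]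
  calc ‖cInt f q0 δ q θ‖ = ‖circleMap 0 δ θ * I‖ * (‖((circleMap q0.1 δ θ - q.1) ^ 2)⁻¹‖
        * ‖f (circleMap q0.1 δ θ, q.2)‖) := by simp [cInt, norm_mul]
    _ ≤ δ * (((δ/2) ^ 2)⁻¹ * M) := by
        rw [h1]
        have hMnn : 0 ≤ M := le_trans (norm_nonneg _) h3
        gcongr

/-- L1: the first partial derivative of a holomorphic function of two variables is
continuous. -/
lemma contOn_deriv_fst (hU : IsOpen U) (hf : DifferentiableOn ℂ f U) :
    ContinuousOn (fun q : ℂ × ℂ => deriv (fun z => f (z, q.2)) q.1) U := by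
  intro q0 hq0
  apply ContinuousAt.continuousWithinAt
  obtain ⟨δ, hδpos, hδU⟩ : ∃ δ > 0, closedBall q0 δ ⊆ U :=
    nhds_basis_closedBall.mem_iff.mp (hU.mem_nhds hq0)
  obtain ⟨M, hM⟩ := (isCompact_closedBall q0 δ).exists_bound_of_continuousOn
    (hf.continuousOn.mono hδU)
  have hcongr : (fun q : ℂ × ℂ => deriv (fun z => f (z, q.2)) q.1)
      =ᶠ[nhds q0] fun q => (2 * π * I)⁻¹ * ∫ θ in (0:ℝ)..(2*π), cInt f q0 δ q θ := by
    filter_upwards [ball_mem_nhds q0 hδpos] with q hq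
    exact partial_fst_rep hU hf hδpos hδU hq
  rw [continuousAt_congr hcongr]
  apply ContinuousAt.mul continuousAt_const
  apply intervalIntegral.continuousAt_of_dominated_interval
    (bound := fun _ => δ * (((δ/2) ^ 2)⁻¹ * M))
  · filter_upwards [closedBall_mem_nhds q0 (by positivity : (0:ℝ) < δ/2)] with q hq
    exact (cauchy_integrand_cont_theta hf hδpos hδU hq).aestronglyMeasurable
  · filter_upwards [closedBall_mem_nhds q0 (by positivity : (0:ℝ) < δ/2)] with q hq
    exact Eventually.of_forall fun θ _ => cauchy_integrand_bound hδpos hM hq θ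
  · exact intervalIntegrable_const
  · exact Eventually.of_forall fun θ _ => cauchy_integrand_cont_q hf hδpos hδU θ

/-- L1': the second partial derivative of a holomorphic function of two variables is
continuous. -/
lemma contOn_deriv_snd (hU : IsOpen U) (hf : DifferentiableOn ℂ f U) :
    ContinuousOn (fun q : ℂ × ℂ => deriv (fun z => f (q.1, z)) q.2) U := by
  have hswap : DifferentiableOn ℂ (fun q : ℂ × ℂ => f (q.2, q.1)) (Prod.swap ⁻¹' U) := by
    intro q hq
    exact ((hf.differentiableAt (hU.mem_nhds hq)).comp q
      (differentiableAt_snd.prodMk differentiableAt_fst)).differentiableWithinAt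
  have h1 := contOn_deriv_fst (U := Prod.swap ⁻¹' U) (hU.preimage continuous_swap) hswap
  exact h1.comp continuous_swap.continuousOn (fun q hq => by simpa using hq)

end PartialDeriv2

noncomputable def cInt' (f : ℂ × ℂ → ℂ) (q0 : ℂ × ℂ) (δ : ℝ) (q : ℂ × ℂ) (θ : ℝ) :
    ℂ × ℂ →L[ℂ] ℂ :=
  (circleMap 0 δ θ * I) •
    ((((circleMap q0.1 δ θ - q.1) ^ 2)⁻¹ •
        (deriv (fun x => f (circleMap q0.1 δ θ, x)) q.2 • ContinuousLinearMap.snd ℂ ℂ ℂ))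
      + f (circleMap q0.1 δ θ, q.2) •
        ((-(((2:ℕ):ℂ) * (circleMap q0.1 δ θ - q.1) ^ (2-1) * -1) /
            ((circleMap q0.1 δ θ - q.1) ^ 2) ^ 2) • ContinuousLinearMap.fst ℂ ℂ ℂ))

section PartialDeriv3

variable {U : Set (ℂ × ℂ)} {f : ℂ × ℂ → ℂ}

lemma cauchy_integrand_hasFDerivAt (hU : IsOpen U) (hf : DifferentiableOn ℂ f U)
    {q0 : ℂ × ℂ} {δ : ℝ} (hδ : 0 < δ) (hδU : closedBall q0 δ ⊆ U) {q : ℂ × ℂ}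
    (hq : q ∈ closedBall q0 (δ/2)) (θ : ℝ) :
    HasFDerivAt (fun q => cInt f q0 δ q θ) (cInt' f q0 δ q θ) q := by
  rw [mem_closedBall, Prod.dist_eq, max_le_iff] at hq
  have hne : circleMap q0.1 δ θ - q.1 ≠ 0 := circle_ne hq.1 θ hδ
  have hmem2 : (circleMap q0.1 δ θ, q.2) ∈ U := by
    apply hδU
    rw [← closedBall_prod_same]
    refine ⟨?_, mem_closedBall.2 (hq.2.trans (by linarith))⟩
    rw [mem_closedBall, Complex.dist_eq, circleMap_sub_center]
    simp [norm_circleMap_zero, abs_of_pos hδ]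
  have h0 : HasDerivAt (fun s : ℂ => circleMap q0.1 δ θ - s) (-1) q.1 := by
    simpa using (hasDerivAt_id q.1).const_sub (circleMap q0.1 δ θ)
  have h1 := (h0.pow 2).inv (pow_ne_zero 2 hne)
  have hu : HasFDerivAt (fun q : ℂ × ℂ => ((circleMap q0.1 δ θ - q.1) ^ 2)⁻¹)
      ((-(((2:ℕ):ℂ) * (circleMap q0.1 δ θ - q.1) ^ (2-1) * -1) /
        ((circleMap q0.1 δ θ - q.1) ^ 2) ^ 2) • ContinuousLinearMap.fst ℂ ℂ ℂ) q :=
    h1.comp_hasFDerivAt q hasFDerivAt_fst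
  have hslice : DifferentiableAt ℂ (fun x => f (circleMap q0.1 δ θ, x)) q.2 :=
    (hf.differentiableAt (hU.mem_nhds hmem2)).comp q.2
      ((differentiableAt_const _).prodMk differentiableAt_id)
  have hv : HasFDerivAt (fun q : ℂ × ℂ => f (circleMap q0.1 δ θ, q.2))
      (deriv (fun x => f (circleMap q0.1 δ θ, x)) q.2 • ContinuousLinearMap.snd ℂ ℂ ℂ) q :=
    hslice.hasDerivAt.comp_hasFDerivAt q hasFDerivAt_snd
  have huv := hu.mul hv
  exact (huv.const_mul (circleMap 0 δ θ * I))

lemma cauchy_integrand'_contOn (hU : IsOpen U) (hf : DifferentiableOn ℂ f U)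
    {q0 : ℂ × ℂ} {δ : ℝ} (hδ : 0 < δ) (hδU : closedBall q0 δ ⊆ U) :
    ContinuousOn (fun ξ : (ℂ × ℂ) × ℝ => cInt' f q0 δ ξ.1 ξ.2)
      (closedBall q0 (δ/2) ×ˢ (univ : Set ℝ)) := by
  have hc1 : Continuous fun ξ : (ℂ × ℂ) × ℝ => circleMap 0 δ ξ.2 * I :=
    ((continuous_circleMap 0 δ).comp continuous_snd).mul continuous_const
  have hz : Continuous fun ξ : (ℂ × ℂ) × ℝ => circleMap q0.1 δ ξ.2 :=
    (continuous_circleMap q0.1 δ).comp continuous_snd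
  have hmemq : ∀ ξ : (ℂ × ℂ) × ℝ, ξ ∈ closedBall q0 (δ/2) ×ˢ (univ : Set ℝ) →
      dist ξ.1.1 q0.1 ≤ δ/2 ∧ dist ξ.1.2 q0.2 ≤ δ/2 := by
    rintro ξ ⟨hξ, -⟩
    rw [mem_closedBall, Prod.dist_eq] at hξ
    exact ⟨le_trans (le_max_left _ _) hξ, le_trans (le_max_right _ _) hξ⟩
  have hne : ∀ ξ ∈ closedBall q0 (δ/2) ×ˢ (univ : Set ℝ),
      circleMap q0.1 δ ξ.2 - ξ.1.1 ≠ 0 := fun ξ hξ => circle_ne (hmemq ξ hξ).1 ξ.2 hδ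
  have hmempair : ∀ ξ ∈ closedBall q0 (δ/2) ×ˢ (univ : Set ℝ),
      (circleMap q0.1 δ ξ.2, ξ.1.2) ∈ closedBall q0 δ := by
    intro ξ hξ
    rw [← closedBall_prod_same]
    refine ⟨?_, mem_closedBall.2 ((hmemq ξ hξ).2.trans (by linarith))⟩
    rw [mem_closedBall, Complex.dist_eq, circleMap_sub_center]
    simp [norm_circleMap_zero, abs_of_pos hδ]
  have hpairC : Continuous fun ξ : (ℂ × ℂ) × ℝ => ((circleMap q0.1 δ ξ.2, ξ.1.2) : ℂ × ℂ) :=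
    hz.prodMk continuous_fst.snd
  have hc2 : ContinuousOn (fun ξ : (ℂ × ℂ) × ℝ => ((circleMap q0.1 δ ξ.2 - ξ.1.1) ^ 2)⁻¹)
      (closedBall q0 (δ/2) ×ˢ (univ : Set ℝ)) :=
    ContinuousOn.inv₀ ((hz.sub continuous_fst.fst).pow 2).continuousOn
      (fun ξ hξ => pow_ne_zero 2 (hne ξ hξ))
  have hc3 : ContinuousOn (fun ξ : (ℂ × ℂ) × ℝ =>
      deriv (fun x => f (circleMap q0.1 δ ξ.2, x)) ξ.1.2)
      (closedBall q0 (δ/2) ×ˢ (univ : Set ℝ)) := by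
    apply ContinuousOn.comp (t := U) (contOn_deriv_snd hU hf) hpairC.continuousOn
    exact fun ξ hξ => hδU (hmempair ξ hξ)
  have hc4 : ContinuousOn (fun ξ : (ℂ × ℂ) × ℝ => f (circleMap q0.1 δ ξ.2, ξ.1.2))
      (closedBall q0 (δ/2) ×ˢ (univ : Set ℝ)) := by
    apply ContinuousOn.comp (t := U) hf.continuousOn hpairC.continuousOn
    exact fun ξ hξ => hδU (hmempair ξ hξ)
  have hc5 : ContinuousOn (fun ξ : (ℂ × ℂ) × ℝ =>
      -(((2:ℕ):ℂ) * (circleMap q0.1 δ ξ.2 - ξ.1.1) ^ (2-1) * -1) /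
        ((circleMap q0.1 δ ξ.2 - ξ.1.1) ^ 2) ^ 2)
      (closedBall q0 (δ/2) ×ˢ (univ : Set ℝ)) := by
    apply ContinuousOn.div
    · exact (((continuous_const.mul ((hz.sub continuous_fst.fst).pow (2-1))).mul
        continuous_const).neg).continuousOn
    · exact (((hz.sub continuous_fst.fst).pow 2).pow 2).continuousOn
    · exact fun ξ hξ => pow_ne_zero 2 (pow_ne_zero 2 (hne ξ hξ))
  simp only [cInt']
  exact hc1.continuousOn.smul
    ((hc2.smul (hc3.smul continuousOn_const)).add (hc4.smul (hc5.smul continuousOn_const)))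

/-- L2: the first partial derivative of a holomorphic function of two variables is
holomorphic. -/
lemma diffOn_deriv_fst (hU : IsOpen U) (hf : DifferentiableOn ℂ f U) :
    DifferentiableOn ℂ (fun q : ℂ × ℂ => deriv (fun z => f (z, q.2)) q.1) U := by
  intro q0 hq0
  apply DifferentiableAt.differentiableWithinAt
  obtain ⟨δ, hδpos, hδU⟩ : ∃ δ > 0, closedBall q0 δ ⊆ U :=
    nhds_basis_closedBall.mem_iff.mp (hU.mem_nhds hq0)
  have hcongr : (fun q : ℂ × ℂ => deriv (fun z => f (z, q.2)) q.1)
      =ᶠ[nhds q0] fun q => (2 * π * I)⁻¹ * ∫ θ in (0:ℝ)..(2*π), cInt f q0 δ q θ := by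
    filter_upwards [ball_mem_nhds q0 hδpos] with q hq
    exact partial_fst_rep hU hf hδpos hδU hq
  rw [hcongr.differentiableAt_iff]
  apply DifferentiableAt.const_mul
  obtain ⟨C, hC⟩ := ((isCompact_closedBall q0 (δ/2)).prod (isCompact_Icc
      (a := (0:ℝ)) (b := 2*π))).exists_bound_of_continuousOn
    ((cauchy_integrand'_contOn hU hf hδpos hδU).mono
      (Set.prod_mono_right (subset_univ _)))
  have hIsub : Set.uIoc (0:ℝ) (2*π) ⊆ Icc (0:ℝ) (2*π) := by
    rw [Set.uIoc_of_le (by positivity)]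
    exact Ioc_subset_Icc_self
  have h1 : ∀ᶠ q in nhds q0, MeasureTheory.AEStronglyMeasurable (fun θ => cInt f q0 δ q θ)
      (MeasureTheory.volume.restrict (Set.uIoc (0:ℝ) (2*π))) := by
    filter_upwards [closedBall_mem_nhds q0 (by positivity : (0:ℝ) < δ/2)] with q hq
    exact (cauchy_integrand_cont_theta hf hδpos hδU hq).aestronglyMeasurable
  have h2 : IntervalIntegrable (fun θ => cInt f q0 δ q0 θ) MeasureTheory.volume 0 (2*π) :=
    (cauchy_integrand_cont_theta hf hδpos hδU
      (mem_closedBall_self (by positivity))).intervalIntegrable 0 (2*π)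
  have h3 : MeasureTheory.AEStronglyMeasurable (fun θ => cInt' f q0 δ q0 θ)
      (MeasureTheory.volume.restrict (Set.uIoc (0:ℝ) (2*π))) := by
    apply ContinuousOn.aestronglyMeasurable _ measurableSet_uIoc
    have hc : Continuous fun θ : ℝ => ((q0, θ) : (ℂ × ℂ) × ℝ) :=
      continuous_const.prodMk continuous_id
    apply ContinuousOn.mono (s := (univ : Set ℝ)) _ (subset_univ _)
    apply ContinuousOn.comp (t := closedBall q0 (δ/2) ×ˢ (univ : Set ℝ))
      (cauchy_integrand'_contOn hU hf hδpos hδU) hc.continuousOn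
    exact fun θ _ => Set.mk_mem_prod (mem_closedBall_self (by positivity)) (mem_univ θ)
  have h4 : ∀ᵐ θ ∂(MeasureTheory.volume), θ ∈ Set.uIoc (0:ℝ) (2*π) →
      ∀ q ∈ ball q0 (δ/2), ‖cInt' f q0 δ q θ‖ ≤ C := by
    apply MeasureTheory.ae_of_all
    intro θ hθ q hq
    have := hC (q, θ) (Set.mk_mem_prod (ball_subset_closedBall hq) (hIsub hθ))
    simpa using this
  have h5 : IntervalIntegrable (fun _ : ℝ => C) MeasureTheory.volume 0 (2*π) :=
    intervalIntegrable_const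
  have h6 : ∀ᵐ θ ∂(MeasureTheory.volume), θ ∈ Set.uIoc (0:ℝ) (2*π) →
      ∀ q ∈ ball q0 (δ/2), HasFDerivAt (fun q => cInt f q0 δ q θ) (cInt' f q0 δ q θ) q := by
    apply MeasureTheory.ae_of_all
    intro θ _ q hq
    exact cauchy_integrand_hasFDerivAt hU hf hδpos hδU (ball_subset_closedBall hq) θ
  have key := intervalIntegral.hasFDerivAt_integral_of_dominated_of_fderiv_le
    (ball_mem_nhds q0 (by positivity : (0:ℝ) < δ/2)) h1 h2 h3 h4 h5 h6
  exact key.differentiableAt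

end PartialDeriv3

noncomputable def HuF (G : ℂ → ℂ → ℂ) : ℂ × ℂ → ℂ := fun r => deriv (fun z => G z r.2) r.1

noncomputable def mainF (G : ℂ → ℂ → ℂ) (S p : ℂ → ℂ) (x0 : ℂ) (q : ℂ × ℂ) (t : ℝ) : ℂ :=
  HuF G (q.1 + S q.2 - S (x0 + (t:ℂ)*(q.2-x0)), x0 + (t:ℂ)*(q.2-x0))
    * p (x0 + (t:ℂ)*(q.2-x0)) * (q.2 - x0)

noncomputable def mainF' (G : ℂ → ℂ → ℂ) (S p : ℂ → ℂ) (x0 : ℂ) (q : ℂ × ℂ) (t : ℝ) :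
    ℂ × ℂ →L[ℂ] ℂ :=
  (HuF G (q.1 + S q.2 - S (x0 + (t:ℂ)*(q.2-x0)), x0 + (t:ℂ)*(q.2-x0)) * p (x0 + (t:ℂ)*(q.2-x0))) •
      ContinuousLinearMap.snd ℂ ℂ ℂ
    + (q.2 - x0) •
      (HuF G (q.1 + S q.2 - S (x0 + (t:ℂ)*(q.2-x0)), x0 + (t:ℂ)*(q.2-x0)) •
          (deriv p (x0 + (t:ℂ)*(q.2-x0)) • ((t:ℂ) • ContinuousLinearMap.snd ℂ ℂ ℂ))
        + p (x0 + (t:ℂ)*(q.2-x0)) •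
          (deriv (fun z => HuF G (z, x0 + (t:ℂ)*(q.2-x0)))
              (q.1 + S q.2 - S (x0 + (t:ℂ)*(q.2-x0))) •
              (ContinuousLinearMap.fst ℂ ℂ ℂ + p q.2 • ContinuousLinearMap.snd ℂ ℂ ℂ
                - p (x0 + (t:ℂ)*(q.2-x0)) • ((t:ℂ) • ContinuousLinearMap.snd ℂ ℂ ℂ))
            + deriv (fun z => HuF G (q.1 + S q.2 - S (x0 + (t:ℂ)*(q.2-x0)), z))
              (x0 + (t:ℂ)*(q.2-x0)) • ((t:ℂ) • ContinuousLinearMap.snd ℂ ℂ ℂ)))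

section MainLemma

variable {D : Set ℂ} {p S : ℂ → ℂ} {U : Set (ℂ × ℂ)} {G : ℂ → ℂ → ℂ} {x0 : ℂ}

lemma hasFDerivAt_mainF (hD : IsOpen D) (hp : DifferentiableOn ℂ p D)
    (hS : ∀ x ∈ D, HasDerivAt S (p x) x) (hU : IsOpen U)
    (hHuD : DifferentiableOn ℂ (HuF G) U) {q : ℂ × ℂ} {t : ℝ}
    (hq2D : q.2 ∈ D) (hYD : x0 + (t:ℂ)*(q.2-x0) ∈ D)
    (hWYU : (q.1 + S q.2 - S (x0 + (t:ℂ)*(q.2-x0)), x0 + (t:ℂ)*(q.2-x0)) ∈ U) :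
    HasFDerivAt (fun q => mainF G S p x0 q t) (mainF' G S p x0 q t) q := by
  have hy : HasFDerivAt (fun q : ℂ × ℂ => x0 + (t:ℂ)*(q.2-x0))
      ((t:ℂ) • ContinuousLinearMap.snd ℂ ℂ ℂ) q :=
    ((hasFDerivAt_snd.sub_const x0).const_mul (t:ℂ)).const_add x0
  have hSy : HasFDerivAt (fun q : ℂ × ℂ => S (x0 + (t:ℂ)*(q.2-x0)))
      (p (x0 + (t:ℂ)*(q.2-x0)) • ((t:ℂ) • ContinuousLinearMap.snd ℂ ℂ ℂ)) q :=
    (hS _ hYD).comp_hasFDerivAt q hy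
  have hSq2 : HasFDerivAt (fun q : ℂ × ℂ => S q.2) (p q.2 • ContinuousLinearMap.snd ℂ ℂ ℂ) q :=
    (hS _ hq2D).comp_hasFDerivAt q hasFDerivAt_snd
  have hw : HasFDerivAt (fun q : ℂ × ℂ => q.1 + S q.2 - S (x0 + (t:ℂ)*(q.2-x0)))
      (ContinuousLinearMap.fst ℂ ℂ ℂ + p q.2 • ContinuousLinearMap.snd ℂ ℂ ℂ
        - p (x0 + (t:ℂ)*(q.2-x0)) • ((t:ℂ) • ContinuousLinearMap.snd ℂ ℂ ℂ)) q :=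
    (hasFDerivAt_fst.add hSq2).sub hSy
  have hwy := hw.prodMk hy
  have hHuAt : DifferentiableAt ℂ (HuF G)
      (q.1 + S q.2 - S (x0 + (t:ℂ)*(q.2-x0)), x0 + (t:ℂ)*(q.2-x0)) :=
    hHuD.differentiableAt (hU.mem_nhds hWYU)
  have hdec := hasFDerivAt_of_partials hHuAt
  have hHuComp : HasFDerivAt
      (fun q : ℂ × ℂ => HuF G (q.1 + S q.2 - S (x0 + (t:ℂ)*(q.2-x0)), x0 + (t:ℂ)*(q.2-x0)))
      (deriv (fun z => HuF G (z, x0 + (t:ℂ)*(q.2-x0)))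
          (q.1 + S q.2 - S (x0 + (t:ℂ)*(q.2-x0))) •
          (ContinuousLinearMap.fst ℂ ℂ ℂ + p q.2 • ContinuousLinearMap.snd ℂ ℂ ℂ
            - p (x0 + (t:ℂ)*(q.2-x0)) • ((t:ℂ) • ContinuousLinearMap.snd ℂ ℂ ℂ))
        + deriv (fun z => HuF G (q.1 + S q.2 - S (x0 + (t:ℂ)*(q.2-x0)), z))
          (x0 + (t:ℂ)*(q.2-x0)) • ((t:ℂ) • ContinuousLinearMap.snd ℂ ℂ ℂ)) q := by
    have hcomp := hdec.comp q hwy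
    exact hcomp
  have hpy : HasFDerivAt (fun q : ℂ × ℂ => p (x0 + (t:ℂ)*(q.2-x0)))
      (deriv p (x0 + (t:ℂ)*(q.2-x0)) • ((t:ℂ) • ContinuousLinearMap.snd ℂ ℂ ℂ)) q :=
    ((hp.differentiableAt (hD.mem_nhds hYD)).hasDerivAt).comp_hasFDerivAt q hy
  have hc := hHuComp.mul hpy
  have hfin := hc.mul (hasFDerivAt_snd.sub_const x0)
  exact hfin

end MainLemma

section MainCont

variable {D : Set ℂ} {p S : ℂ → ℂ} {U : Set (ℂ × ℂ)} {G : ℂ → ℂ → ℂ} {x0 : ℂ}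

lemma mainF_contOn (hScont : ContinuousOn S D) (hpC : ContinuousOn p D)
    (hp'C : ContinuousOn (deriv p) D) (hHuC : ContinuousOn (HuF G) U)
    (hP1 : ContinuousOn (fun r : ℂ × ℂ => deriv (fun z => HuF G (z, r.2)) r.1) U)
    (hP2 : ContinuousOn (fun r : ℂ × ℂ => deriv (fun z => HuF G (r.1, z)) r.2) U)
    {A : Set ((ℂ × ℂ) × ℝ)}
    (hq2D : ∀ ξ ∈ A, ξ.1.2 ∈ D)
    (hYD : ∀ ξ ∈ A, x0 + (ξ.2:ℂ)*(ξ.1.2-x0) ∈ D)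
    (hWYU : ∀ ξ ∈ A,
      ((ξ.1.1 + S ξ.1.2 - S (x0 + (ξ.2:ℂ)*(ξ.1.2-x0)), x0 + (ξ.2:ℂ)*(ξ.1.2-x0)) : ℂ × ℂ) ∈ U) :
    ContinuousOn (fun ξ : (ℂ × ℂ) × ℝ => mainF G S p x0 ξ.1 ξ.2) A ∧
      ContinuousOn (fun ξ : (ℂ × ℂ) × ℝ => mainF' G S p x0 ξ.1 ξ.2) A := by
  have ctR : Continuous fun ξ : (ℂ × ℂ) × ℝ => ((ξ.2 : ℝ) : ℂ) :=
    Complex.continuous_ofReal.comp continuous_snd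
  have cY : Continuous fun ξ : (ℂ × ℂ) × ℝ => x0 + (ξ.2:ℂ)*(ξ.1.2-x0) :=
    continuous_const.add (ctR.mul ((continuous_fst.snd).sub continuous_const))
  have cSY : ContinuousOn (fun ξ : (ℂ × ℂ) × ℝ => S (x0 + (ξ.2:ℂ)*(ξ.1.2-x0))) A :=
    ContinuousOn.comp (t := D) hScont cY.continuousOn hYD
  have cSq2 : ContinuousOn (fun ξ : (ℂ × ℂ) × ℝ => S ξ.1.2) A :=
    ContinuousOn.comp (t := D) hScont (continuous_fst.snd).continuousOn hq2D
  have cW : ContinuousOn (fun ξ : (ℂ × ℂ) × ℝ =>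
      ξ.1.1 + S ξ.1.2 - S (x0 + (ξ.2:ℂ)*(ξ.1.2-x0))) A :=
    (continuous_fst.fst.continuousOn.add cSq2).sub cSY
  have cWY : ContinuousOn (fun ξ : (ℂ × ℂ) × ℝ =>
      ((ξ.1.1 + S ξ.1.2 - S (x0 + (ξ.2:ℂ)*(ξ.1.2-x0)), x0 + (ξ.2:ℂ)*(ξ.1.2-x0)) : ℂ × ℂ)) A :=
    cW.prodMk cY.continuousOn
  have cHu : ContinuousOn (fun ξ : (ℂ × ℂ) × ℝ =>
      HuF G (ξ.1.1 + S ξ.1.2 - S (x0 + (ξ.2:ℂ)*(ξ.1.2-x0)), x0 + (ξ.2:ℂ)*(ξ.1.2-x0))) A :=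
    ContinuousOn.comp (t := U) hHuC cWY hWYU
  have cP1 : ContinuousOn (fun ξ : (ℂ × ℂ) × ℝ =>
      deriv (fun z => HuF G (z, x0 + (ξ.2:ℂ)*(ξ.1.2-x0)))
        (ξ.1.1 + S ξ.1.2 - S (x0 + (ξ.2:ℂ)*(ξ.1.2-x0)))) A :=
    ContinuousOn.comp (t := U) hP1 cWY hWYU
  have cP2 : ContinuousOn (fun ξ : (ℂ × ℂ) × ℝ =>
      deriv (fun z => HuF G (ξ.1.1 + S ξ.1.2 - S (x0 + (ξ.2:ℂ)*(ξ.1.2-x0)), z))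
        (x0 + (ξ.2:ℂ)*(ξ.1.2-x0))) A :=
    ContinuousOn.comp (t := U) hP2 cWY hWYU
  have cp : ContinuousOn (fun ξ : (ℂ × ℂ) × ℝ => p (x0 + (ξ.2:ℂ)*(ξ.1.2-x0))) A :=
    ContinuousOn.comp (t := D) hpC cY.continuousOn hYD
  have cp' : ContinuousOn (fun ξ : (ℂ × ℂ) × ℝ => deriv p (x0 + (ξ.2:ℂ)*(ξ.1.2-x0))) A :=
    ContinuousOn.comp (t := D) hp'C cY.continuousOn hYD
  have cpq2 : ContinuousOn (fun ξ : (ℂ × ℂ) × ℝ => p ξ.1.2) A :=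
    ContinuousOn.comp (t := D) hpC (continuous_fst.snd).continuousOn hq2D
  constructor
  · simp only [mainF]
    exact (cHu.mul cp).mul ((continuous_fst.snd.sub continuous_const).continuousOn)
  · simp only [mainF']
    apply ContinuousOn.add
    · exact (cHu.mul cp).smul continuousOn_const
    · apply ContinuousOn.smul ((continuous_fst.snd.sub continuous_const).continuousOn)
      apply ContinuousOn.add
      · exact cHu.smul (cp'.smul (ctR.continuousOn.smul continuousOn_const))
      · apply ContinuousOn.smul cp
        apply ContinuousOn.add
        · apply ContinuousOn.smul cP1
          exact (continuousOn_const.add (cpq2.smul continuousOn_const)).sub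
            (cp.smul (ctR.continuousOn.smul continuousOn_const))
        · exact cP2.smul (ctR.continuousOn.smul continuousOn_const)

end MainCont


/-- If `G(s,x)` is holomorphic in both variables near `(s0 + S_j x0, x0)`,
then `(R_j G)(s,x) = ∫_{x0}^x (D₁G)(s + S_j x − S_j y, y) p_j y dy` (along the straight
path from `x0` to `x` in the simply connected domain `D` where `p_j` is holomorphic and
`S_j` is its primitive) is holomorphic in `(s,x)` near `(s0, x0)`. -/
theorem stmt_0
    (D : Set ℂ) (hD : IsOpen D) (hDconn : IsConnected D)
    (hDsc : SimplyConnectedSpace D)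
    (x0 : ℂ) (hx0 : x0 ∈ D)
    (p S : ℂ → ℂ) (hp : DifferentiableOn ℂ p D)
    (hS : ∀ x ∈ D, HasDerivAt S (p x) x) (hS0 : S x0 = 0)
    (G : ℂ → ℂ → ℂ) (s0 : ℂ)
    (U : Set (ℂ × ℂ)) (hU : IsOpen U) (hmem : (s0 + S x0, x0) ∈ U)
    (hG : DifferentiableOn ℂ (fun q : ℂ × ℂ => G q.1 q.2) U) :
    ∃ W : Set (ℂ × ℂ), IsOpen W ∧ (s0, x0) ∈ W ∧
      DifferentiableOn ℂ
        (fun q : ℂ × ℂ =>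
          ∫ t in (0:ℝ)..1,
            deriv (fun z => G z (x0 + (t : ℂ) * (q.2 - x0)))
                (q.1 + S q.2 - S (x0 + (t : ℂ) * (q.2 - x0)))
              * p (x0 + (t : ℂ) * (q.2 - x0)) * (q.2 - x0)) W := by
  rw [hS0, add_zero] at hmem
  obtain ⟨δ, hδpos, hδU⟩ : ∃ δ > 0, closedBall ((s0, x0) : ℂ × ℂ) δ ⊆ U :=
    nhds_basis_closedBall.mem_iff.mp (hU.mem_nhds hmem)
  obtain ⟨ρ, hρpos, hρD⟩ : ∃ ρ > 0, closedBall x0 ρ ⊆ D :=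
    nhds_basis_closedBall.mem_iff.mp (hD.mem_nhds hx0)
  have hSx0cont : ContinuousAt S x0 := (hS x0 hx0).continuousAt
  rw [Metric.continuousAt_iff] at hSx0cont
  obtain ⟨η, hηpos, hη⟩ := hSx0cont (δ/4) (by positivity)
  set ε := min ρ (min (δ/2) (η/2)) with hεdef
  have hε0 : 0 < ε := by positivity
  have hερ : ε ≤ ρ := min_le_left _ _
  have hεδ : ε ≤ δ/2 := le_trans (min_le_right _ _) (min_le_left _ _)
  have hεη : ε < η := lt_of_le_of_lt (le_trans (min_le_right _ _) (min_le_right _ _))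
    (by linarith)
  have hosc : ∀ u ∈ closedBall x0 ε, dist (S u) (S x0) ≤ δ/4 := by
    intro u hu
    exact le_of_lt (hη (lt_of_le_of_lt (mem_closedBall.1 hu) hεη))
  -- memberships
  have hYmem : ∀ q ∈ closedBall ((s0, x0) : ℂ × ℂ) ε, ∀ t ∈ Icc (0:ℝ) 1,
      x0 + (t:ℂ)*(q.2-x0) ∈ closedBall x0 ε := by
    intro q hq t ht
    rw [mem_closedBall, Prod.dist_eq, max_le_iff] at hq
    rw [mem_closedBall, Complex.dist_eq]
    have e : x0 + (t:ℂ)*(q.2-x0) - x0 = (t:ℂ)*(q.2-x0) := by ring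
    rw [e, norm_mul]
    have h1 : ‖(t:ℂ)‖ ≤ 1 := by
      rw [Complex.norm_real, Real.norm_eq_abs, _root_.abs_of_nonneg ht.1]
      exact ht.2
    have h2 : ‖q.2 - x0‖ ≤ ε := by
      rw [← Complex.dist_eq]
      exact hq.2
    calc ‖(t:ℂ)‖ * ‖q.2-x0‖ ≤ 1 * ε :=
        mul_le_mul h1 h2 (by positivity) zero_le_one
      _ = ε := one_mul ε
  have hWYmem : ∀ q ∈ closedBall ((s0, x0) : ℂ × ℂ) ε, ∀ t ∈ Icc (0:ℝ) 1,
      ((q.1 + S q.2 - S (x0 + (t:ℂ)*(q.2-x0)), x0 + (t:ℂ)*(q.2-x0)) : ℂ × ℂ)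
        ∈ closedBall ((s0, x0) : ℂ × ℂ) δ := by
    intro q hq t ht
    have hY := hYmem q hq t ht
    rw [mem_closedBall, Prod.dist_eq, max_le_iff] at hq
    rw [← closedBall_prod_same]
    constructor
    · rw [mem_closedBall, Complex.dist_eq]
      have e : q.1 + S q.2 - S (x0 + (t:ℂ)*(q.2-x0)) - s0
          = (q.1 - s0) + ((S q.2 - S x0) - (S (x0 + (t:ℂ)*(q.2-x0)) - S x0)) := by ring
      rw [e]
      have b1 : ‖q.1 - s0‖ ≤ δ/2 := by
        rw [← Complex.dist_eq]; exact hq.1.trans hεδ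
      have b2 : ‖S q.2 - S x0‖ ≤ δ/4 := by
        rw [← Complex.dist_eq]
        exact hosc q.2 (mem_closedBall.2 hq.2)
      have b3 : ‖S (x0 + (t:ℂ)*(q.2-x0)) - S x0‖ ≤ δ/4 := by
        rw [← Complex.dist_eq]
        exact hosc _ hY
      calc ‖(q.1 - s0) + ((S q.2 - S x0) - (S (x0 + (t:ℂ)*(q.2-x0)) - S x0))‖
          ≤ ‖q.1 - s0‖
            + ‖(S q.2 - S x0) - (S (x0 + (t:ℂ)*(q.2-x0)) - S x0)‖ :=
            norm_add_le _ _
        _ ≤ ‖q.1 - s0‖ + (‖S q.2 - S x0‖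
            + ‖S (x0 + (t:ℂ)*(q.2-x0)) - S x0‖) := by
            have := norm_sub_le (S q.2 - S x0) (S (x0 + (t:ℂ)*(q.2-x0)) - S x0)
            linarith
        _ ≤ δ/2 + (δ/4 + δ/4) := by linarith
        _ = δ := by ring
    · exact mem_closedBall.2 ((mem_closedBall.1 hY).trans (by linarith))
  -- differentiability/continuity of the partial derivative H of G
  have hHuD : DifferentiableOn ℂ (HuF G) U := diffOn_deriv_fst hU hG
  have hHuC : ContinuousOn (HuF G) U := contOn_deriv_fst hU hG
  have hP1 : ContinuousOn (fun r : ℂ × ℂ => deriv (fun z => HuF G (z, r.2)) r.1) U :=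
    contOn_deriv_fst hU hHuD
  have hP2 : ContinuousOn (fun r : ℂ × ℂ => deriv (fun z => HuF G (r.1, z)) r.2) U :=
    contOn_deriv_snd hU hHuD
  have hScont : ContinuousOn S D := fun x hx => ((hS x hx).continuousAt).continuousWithinAt
  have hpC : ContinuousOn p D := hp.continuousOn
  have hp'C : ContinuousOn (deriv p) D := ((hp.analyticOnNhd hD).deriv).continuousOn
  -- joint continuity on the compact product set
  have hq2Dmem : ∀ ξ ∈ (closedBall ((s0, x0) : ℂ × ℂ) ε ×ˢ Icc (0:ℝ) 1), ξ.1.2 ∈ D := by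
    rintro ξ ⟨hξ1, -⟩
    rw [mem_closedBall, Prod.dist_eq, max_le_iff] at hξ1
    exact hρD (mem_closedBall.2 (hξ1.2.trans hερ))
  have hYDmem : ∀ ξ ∈ (closedBall ((s0, x0) : ℂ × ℂ) ε ×ˢ Icc (0:ℝ) 1),
      x0 + (ξ.2:ℂ)*(ξ.1.2-x0) ∈ D := by
    rintro ξ ⟨hξ1, hξ2⟩
    exact hρD (mem_closedBall.2 ((mem_closedBall.1 (hYmem ξ.1 hξ1 ξ.2 hξ2)).trans hερ))
  have hWYUmem : ∀ ξ ∈ (closedBall ((s0, x0) : ℂ × ℂ) ε ×ˢ Icc (0:ℝ) 1),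
      ((ξ.1.1 + S ξ.1.2 - S (x0 + (ξ.2:ℂ)*(ξ.1.2-x0)), x0 + (ξ.2:ℂ)*(ξ.1.2-x0)) : ℂ × ℂ)
        ∈ U := by
    rintro ξ ⟨hξ1, hξ2⟩
    exact hδU (hWYmem ξ.1 hξ1 ξ.2 hξ2)
  obtain ⟨hContF, hContF'⟩ := mainF_contOn (D := D) (U := U) hScont hpC hp'C hHuC hP1 hP2
    hq2Dmem hYDmem hWYUmem
  obtain ⟨C, hC⟩ := (((isCompact_closedBall ((s0, x0) : ℂ × ℂ) ε).prod
    (isCompact_Icc (a := (0:ℝ)) (b := 1)))).exists_bound_of_continuousOn hContF'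
  have hIsub : Set.uIoc (0:ℝ) 1 ⊆ Icc (0:ℝ) 1 := by
    rw [Set.uIoc_of_le zero_le_one]
    exact Ioc_subset_Icc_self
  refine ⟨ball ((s0, x0) : ℂ × ℂ) ε, isOpen_ball, mem_ball_self hε0, ?_⟩
  show DifferentiableOn ℂ
    (fun q : ℂ × ℂ => ∫ t in (0:ℝ)..1, mainF G S p x0 q t) (ball ((s0, x0) : ℂ × ℂ) ε)
  intro qs hqs
  apply DifferentiableAt.differentiableWithinAt
  have hε' : 0 < ε - dist qs ((s0, x0) : ℂ × ℂ) := by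
    rw [mem_ball] at hqs; linarith
  have hballsub : ball qs (ε - dist qs ((s0, x0) : ℂ × ℂ)) ⊆ closedBall ((s0, x0) : ℂ × ℂ) ε :=
    (ball_subset_ball' (by linarith)).trans ball_subset_closedBall
  have hcontq : ∀ q ∈ closedBall ((s0, x0) : ℂ × ℂ) ε,
      ContinuousOn (fun t => mainF G S p x0 q t) (Icc (0:ℝ) 1) := by
    intro q hq
    apply ContinuousOn.comp (t := closedBall ((s0, x0) : ℂ × ℂ) ε ×ˢ Icc (0:ℝ) 1) hContF
      ((continuous_const.prodMk continuous_id).continuousOn)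
    exact fun t ht => Set.mk_mem_prod hq ht
  have H1 : ∀ᶠ q in nhds qs, MeasureTheory.AEStronglyMeasurable
      (fun t => mainF G S p x0 q t) (MeasureTheory.volume.restrict (Set.uIoc (0:ℝ) 1)) := by
    filter_upwards [ball_mem_nhds qs hε'] with q hq
    exact ((hcontq q (hballsub hq)).mono hIsub).aestronglyMeasurable measurableSet_uIoc
  have H2 : IntervalIntegrable (fun t => mainF G S p x0 qs t) MeasureTheory.volume 0 1 := by
    apply ContinuousOn.intervalIntegrable
    rw [Set.uIcc_of_le zero_le_one]
    exact hcontq qs (ball_subset_closedBall (mem_ball.2 (by rw [mem_ball] at hqs; exact hqs)))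
  have H3 : MeasureTheory.AEStronglyMeasurable (fun t => mainF' G S p x0 qs t)
      (MeasureTheory.volume.restrict (Set.uIoc (0:ℝ) 1)) := by
    have hc : ContinuousOn (fun t => mainF' G S p x0 qs t) (Icc (0:ℝ) 1) := by
      apply ContinuousOn.comp (t := closedBall ((s0, x0) : ℂ × ℂ) ε ×ˢ Icc (0:ℝ) 1) hContF'
        ((continuous_const.prodMk continuous_id).continuousOn)
      exact fun t ht => Set.mk_mem_prod (ball_subset_closedBall hqs) ht
    exact (hc.mono hIsub).aestronglyMeasurable measurableSet_uIoc
  have H4 : ∀ᵐ t ∂(MeasureTheory.volume), t ∈ Set.uIoc (0:ℝ) 1 →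
      ∀ q ∈ ball qs (ε - dist qs ((s0, x0) : ℂ × ℂ)), ‖mainF' G S p x0 q t‖ ≤ C := by
    apply MeasureTheory.ae_of_all
    intro t ht q hq
    have := hC (q, t) (Set.mk_mem_prod (hballsub hq) (hIsub ht))
    simpa using this
  have H5 : IntervalIntegrable (fun _ : ℝ => C) MeasureTheory.volume 0 1 :=
    intervalIntegrable_const
  have H6 : ∀ᵐ t ∂(MeasureTheory.volume), t ∈ Set.uIoc (0:ℝ) 1 →
      ∀ q ∈ ball qs (ε - dist qs ((s0, x0) : ℂ × ℂ)),
        HasFDerivAt (fun q => mainF G S p x0 q t) (mainF' G S p x0 q t) q := by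
    apply MeasureTheory.ae_of_all
    intro t ht q hq
    have hqmem := hballsub hq
    have htmem : t ∈ Icc (0:ℝ) 1 := hIsub ht
    apply hasFDerivAt_mainF hD hp hS hU hHuD
    · exact hq2Dmem (q, t) (Set.mk_mem_prod hqmem htmem)
    · exact hYDmem (q, t) (Set.mk_mem_prod hqmem htmem)
    · exact hWYUmem (q, t) (Set.mk_mem_prod hqmem htmem)
  have key := intervalIntegral.hasFDerivAt_integral_of_dominated_of_fderiv_le
    (ball_mem_nhds _ hε') H1 H2 H3 H4 H5 H6
  exact key.differentiableAt
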